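/- arXiv:1907.11359 — 8 statements merged into one kernel-verified Lean document; each statement's English description precedes it below -/
import Mathlib

section
/- Let g(x) = 1 - ∑_{k≥1} a_k x^k with all a_k ≥ 0, and suppose g(x) > 0 for all x ∈ (-1,1). Then for every x ∈ [0,1), g(x)/g(-x) ≤ (1 - a_1 x)/(1 + a_1 x). -/
theorem stmt_1 (a : ℕ → ℝ) (g : ℝ → ℝ)
    (ha : ∀ k, 0 ≤ a k)
    (hsum : ∀ x ∈ Set.Ioo (-1:ℝ) 1, Summable (fun k : ℕ => a (k + 1) * x ^ (k + 1)))
    (hg : ∀ x ∈ Set.Ioo (-1:ℝ) 1, g x = 1 - ∑' k : ℕ, a (k + 1) * x ^ (k + 1))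
    (hpos : ∀ x ∈ Set.Ioo (-1:ℝ) 1, 0 < g x) :
    ∀ x ∈ Set.Ico (0:ℝ) 1, g x / g (-x) ≤ (1 - a 1 * x) / (1 + a 1 * x) := by
  intro x hx
  obtain ⟨hx0, hx1⟩ := hx
  have hxm : x ∈ Set.Ioo (-1:ℝ) 1 := ⟨by linarith, hx1⟩
  have hxm' : -x ∈ Set.Ioo (-1:ℝ) 1 := ⟨by linarith, by linarith⟩
  have hS1 := hsum x hxm
  have hS2 := hsum (-x) hxm'
  have hgm := hpos (-x) hxm'
  rw [hg (-x) hxm'] at hgm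
  rw [hg x hxm, hg (-x) hxm']
  set Sp := ∑' k : ℕ, a (k+1) * x ^ (k+1) with hSp
  set Sm := ∑' k : ℕ, a (k+1) * (-x) ^ (k+1) with hSm
  have hkey : ∀ n : ℕ, (-x)^n ≤ x^n := fun n => by
    calc (-x)^n ≤ |(-x)^n| := le_abs_self _
    _ = x^n := by rw [abs_pow, abs_neg, abs_of_nonneg hx0]
  have hkey2 : ∀ n : ℕ, -x^n ≤ (-x)^n := fun n => by
    have h := neg_abs_le ((-x)^n)
    rwa [abs_pow, abs_neg, abs_of_nonneg hx0] at h
  have hdiff : 2 * (a 1 * x) ≤ Sp - Sm := by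
    have hsub : Summable (fun k : ℕ => a (k+1)*x^(k+1) - a (k+1)*(-x)^(k+1)) :=
      hS1.sub hS2
    have h0 := Summable.le_tsum hsub 0 (fun j _ => by
      have h := hkey (j+1)
      have := ha (j+1)
      nlinarith)
    rw [hSp, hSm, ← Summable.tsum_sub hS1 hS2]
    calc 2 * (a 1 * x) = a (0+1)*x^(0+1) - a (0+1)*(-x)^(0+1) := by ring
    _ ≤ _ := h0
  have hsum0 : 0 ≤ Sp + Sm := by
    rw [hSp, hSm, ← Summable.tsum_add hS1 hS2]
    apply tsum_nonneg
    intro k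
    have h := hkey2 (k+1)
    have h2 : 0 ≤ x^(k+1) := pow_nonneg hx0 _
    nlinarith [ha (k+1)]
  have hc : 0 ≤ a 1 * x := mul_nonneg (ha 1) hx0
  rw [div_le_div_iff₀ hgm (by linarith)]
  nlinarith [mul_nonneg hc hsum0]
end

section
/- Let p ≥ 2, y ≥ 0, and a, b ∈ ℝ with |cos b| ≥ |cos a|. Then (y²+1+2y·cos b)^{p/2} + (y²+1-2y·cos b)^{p/2} ≥ (y²+1+2y·cos a)^{p/2} + (y²+1-2y·cos a)^{p/2}. -/
lemma aux_key (q A B s t : ℝ) (hq : 1 ≤ q) (hB : 0 ≤ B) (hs : 0 ≤ s) (hst : s ≤ t)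
    (hAt : 0 ≤ A - B * t) :
    (A + B * s) ^ q + (A - B * s) ^ q ≤ (A + B * t) ^ q + (A - B * t) ^ q := by
  have ht : 0 ≤ t := le_trans hs hst
  rcases eq_or_lt_of_le ht with h0 | h0
  · have hs0 : s = 0 := le_antisymm (h0 ▸ hst) hs
    rw [hs0, ← h0]
  · have hcv := convexOn_rpow hq
    set l : ℝ := (t + s) / (2 * t) with hl
    set m : ℝ := (t - s) / (2 * t) with hm
    have hl0 : 0 ≤ l := by positivity
    have hm0 : 0 ≤ m := by
      apply div_nonneg (by linarith) (by linarith)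
    have hlm : l + m = 1 := by rw [hl, hm]; field_simp; ring
    have hxmem : A + B * t ∈ Set.Ici (0 : ℝ) := by
      simp only [Set.mem_Ici]; nlinarith
    have hymem : A - B * t ∈ Set.Ici (0 : ℝ) := Set.mem_Ici.mpr (by linarith)
    have h1 := hcv.2 hxmem hymem hl0 hm0 hlm
    have h2 := hcv.2 hxmem hymem hm0 hl0 (by linarith)
    simp only [smul_eq_mul] at h1 h2
    have e1 : l * (A + B * t) + m * (A - B * t) = A + B * s := by
      rw [hl, hm]; field_simp; ring
    have e2 : m * (A + B * t) + l * (A - B * t) = A - B * s := by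
      rw [hl, hm]; field_simp; ring
    rw [e1] at h1; rw [e2] at h2
    have h4 : l * (A + B * t) ^ q + m * (A - B * t) ^ q
        + (m * (A + B * t) ^ q + l * (A - B * t) ^ q)
        = (A + B * t) ^ q + (A - B * t) ^ q := by
      linear_combination ((A + B * t) ^ q + (A - B * t) ^ q) * hlm
    linarith

theorem stmt_4 (p y a b : ℝ) (hp : 2 ≤ p) (hy : 0 ≤ y)
    (hab : |Real.cos a| ≤ |Real.cos b|) :
    (y ^ 2 + 1 + 2 * y * Real.cos a) ^ (p / 2) + (y ^ 2 + 1 - 2 * y * Real.cos a) ^ (p / 2)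
      ≤ (y ^ 2 + 1 + 2 * y * Real.cos b) ^ (p / 2)
        + (y ^ 2 + 1 - 2 * y * Real.cos b) ^ (p / 2) := by
  have hcb : |Real.cos b| ≤ 1 := Real.abs_cos_le_one b
  have key := aux_key (p / 2) (y ^ 2 + 1) (2 * y) |Real.cos a| |Real.cos b|
    (by linarith) (by linarith) (abs_nonneg _) hab (by nlinarith [sq_nonneg (y - 1), abs_nonneg (Real.cos b)])
  have ea : (y ^ 2 + 1 + 2 * y * Real.cos a) ^ (p / 2)
      + (y ^ 2 + 1 - 2 * y * Real.cos a) ^ (p / 2)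
      = (y ^ 2 + 1 + 2 * y * |Real.cos a|) ^ (p / 2)
      + (y ^ 2 + 1 - 2 * y * |Real.cos a|) ^ (p / 2) := by
    rcases abs_cases (Real.cos a) with ⟨h, _⟩ | ⟨h, _⟩ <;> rw [h] <;> ring_nf
  have eb : (y ^ 2 + 1 + 2 * y * Real.cos b) ^ (p / 2)
      + (y ^ 2 + 1 - 2 * y * Real.cos b) ^ (p / 2)
      = (y ^ 2 + 1 + 2 * y * |Real.cos b|) ^ (p / 2)
      + (y ^ 2 + 1 - 2 * y * |Real.cos b|) ^ (p / 2) := by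
    rcases abs_cases (Real.cos b) with ⟨h, _⟩ | ⟨h, _⟩ <;> rw [h] <;> ring_nf
  rw [ea, eb]
  calc _ ≤ ((y^2+1) + 2*y * |Real.cos b|) ^ (p/2) + ((y^2+1) - 2*y * |Real.cos b|) ^ (p/2) := by
        convert key using 3 <;> ring
    _ = _ := by ring_nf
end

section
/- For p ≥ 3 and u ∈ ℝ with u ≥ 0, b ∈ [1/(p-1), 1], and 1 - u(p-2)√(1-b) > 0, one has ((1+bu²(p-2)-2u√(1-b))/(1+bu²(p-2)+2u√(1-b)))^{p/2-1} ≥ (1-u(p-2)√(1-b))/(1+u(p-2)√(1-b)). -/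
open Real Set

lemma bern_aux (β : ℝ) (hβ : 1 ≤ β) (s : ℝ) (hs : 0 ≤ s) (hs1 : s < 1) :
    (1 + s) ^ β * (1 - β * s) ≤ (1 - s) ^ β * (1 + β * s) := by
  set f : ℝ → ℝ := fun x => (1 - x) ^ β * (1 + β * x) - (1 + x) ^ β * (1 - β * x) with hf
  have hder : ∀ x : ℝ, HasDerivAt f
      (((-1) * β * (1 - x) ^ (β - 1)) * (1 + β * x) + (1 - x) ^ β * β
        - ((1 * β * (1 + x) ^ (β - 1)) * (1 - β * x) + (1 + x) ^ β * (-β))) x := by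
    intro x
    have h1 : HasDerivAt (fun x : ℝ => 1 - x) (-1) x := (hasDerivAt_id x).const_sub 1
    have h2 : HasDerivAt (fun x : ℝ => 1 + x) 1 x := (hasDerivAt_id x).const_add 1
    have h3 : HasDerivAt (fun x : ℝ => (1 - x) ^ β) ((-1) * β * (1 - x) ^ (β - 1)) x :=
      h1.rpow_const (Or.inr hβ)
    have h4 : HasDerivAt (fun x : ℝ => (1 + x) ^ β) (1 * β * (1 + x) ^ (β - 1)) x :=
      h2.rpow_const (Or.inr hβ)
    have h5 : HasDerivAt (fun x : ℝ => 1 + β * x) β x := by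
      simpa using ((hasDerivAt_id x).const_mul β).const_add 1
    have h6 : HasDerivAt (fun x : ℝ => 1 - β * x) (-β) x := by
      simpa using ((hasDerivAt_id x).const_mul β).const_sub 1
    exact (h3.mul h5).sub (h4.mul h6)
  have hmono : MonotoneOn f (Icc 0 s) := by
    apply monotoneOn_of_deriv_nonneg (convex_Icc 0 s)
    · exact fun x _ => (hder x).differentiableAt.continuousAt.continuousWithinAt
    · exact fun x _ => (hder x).differentiableAt.differentiableWithinAt
    · intro x hx
      rw [interior_Icc, mem_Ioo] at hx
      rw [(hder x).deriv]
      have hx1 : x < 1 := lt_of_lt_of_le hx.2 hs1.le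
      have h1x : (0:ℝ) ≤ 1 - x := by linarith
      have honex : (0:ℝ) < 1 - x := by linarith
      have e1 : (1 - x) ^ β = (1 - x) ^ (β - 1) * (1 - x) := by
        have h := Real.rpow_add honex (β - 1) 1
        rw [Real.rpow_one, show β - 1 + 1 = β from by ring] at h
        exact h
      have e2 : (1 + x) ^ β = (1 + x) ^ (β - 1) * (1 + x) := by
        have h := Real.rpow_add (show (0:ℝ) < 1 + x by linarith) (β - 1) 1
        rw [Real.rpow_one, show β - 1 + 1 = β from by ring] at h
        exact h
      have e3 : (1 - x) ^ (β - 1) ≤ (1 + x) ^ (β - 1) :=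
        Real.rpow_le_rpow h1x (by linarith) (by linarith)
      have e4 : (0:ℝ) ≤ (1 - x) ^ (β - 1) := Real.rpow_nonneg h1x _
      rw [e1, e2]
      nlinarith [mul_nonneg (mul_nonneg (mul_nonneg (show (0:ℝ) ≤ β by linarith)
        (show (0:ℝ) ≤ β + 1 by linarith)) hx.1.le) (sub_nonneg.mpr e3)]
  have h0 : f 0 ≤ f s := hmono (by simp [hs]) (by simp [hs, le_refl]) hs
  have hfz : f 0 = 0 := by simp [hf]
  have := hfz ▸ h0
  simp only [hf] at this
  linarith

lemma bern_div (β : ℝ) (hβ : 1 ≤ β) (s : ℝ) (hs : 0 ≤ s) (hs1 : s < 1) :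
    (1 - β * s) / (1 + β * s) ≤ ((1 - s) / (1 + s)) ^ β := by
  have h1 : (0:ℝ) < 1 + β * s := by nlinarith
  have h2 : (0:ℝ) < (1 + s) ^ β := Real.rpow_pos_of_pos (by linarith) β
  rw [Real.div_rpow (by linarith) (by linarith), div_le_div_iff₀ h1 h2]
  nlinarith [bern_aux β hβ s hs hs1]

theorem stmt_5 (p u b : ℝ) (hp : 3 ≤ p) (hu : 0 ≤ u)
    (hb : b ∈ Set.Icc (1 / (p - 1)) 1)
    (hpos : 0 < 1 - u * (p - 2) * Real.sqrt (1 - b)) :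
    (1 - u * (p - 2) * Real.sqrt (1 - b)) / (1 + u * (p - 2) * Real.sqrt (1 - b))
      ≤ ((1 + b * u ^ 2 * (p - 2) - 2 * u * Real.sqrt (1 - b)) /
          (1 + b * u ^ 2 * (p - 2) + 2 * u * Real.sqrt (1 - b))) ^ (p / 2 - 1) := by
  obtain ⟨hbl, hbu⟩ := hb
  set s : ℝ := u * Real.sqrt (1 - b) with hsdef
  have hp1 : (0:ℝ) < p - 1 := by linarith
  have hβ : (1:ℝ) ≤ p - 2 := by linarith
  have hs0 : 0 ≤ s := mul_nonneg hu (Real.sqrt_nonneg _)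
  have hsq : s ^ 2 = u ^ 2 * (1 - b) := by
    rw [hsdef, mul_pow, Real.sq_sqrt (by linarith)]
  have hβs : (p - 2) * s < 1 := by
    have : u * (p - 2) * Real.sqrt (1 - b) = (p - 2) * s := by rw [hsdef]; ring
    linarith [hpos, this ▸ hpos]
  have hs1 : s < 1 := by nlinarith
  have hbpos : 0 < b := lt_of_lt_of_le (by positivity) hbl
  have hbp1 : 1 ≤ b * (p - 1) := by
    rw [div_le_iff₀ hp1] at hbl; linarith
  have hA : 1 + s ^ 2 ≤ 1 + b * u ^ 2 * (p - 2) := by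
    rw [hsq]; nlinarith [sq_nonneg u]
  set A : ℝ := 1 + b * u ^ 2 * (p - 2) with hAdef
  have hA1 : (1:ℝ) + s ^ 2 ≤ A := hA
  have hApos : 0 < A + 2 * s := by nlinarith
  have hAm : (1 - s) ^ 2 ≤ A - 2 * s := by nlinarith
  -- rewrite goal in terms of s and A
  have e1 : u * (p - 2) * Real.sqrt (1 - b) = (p - 2) * s := by rw [hsdef]; ring
  have e2 : 2 * u * Real.sqrt (1 - b) = 2 * s := by rw [hsdef]; ring
  rw [e1, e2]
  -- chain
  have step1 : (1 - (p - 2) * s) / (1 + (p - 2) * s) ≤ ((1 - s) / (1 + s)) ^ (p - 2) :=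
    bern_div (p - 2) hβ s hs0 hs1
  have hq : (0:ℝ) ≤ p / 2 - 1 := by linarith
  have hbase0 : (0:ℝ) ≤ (1 - s) / (1 + s) := by
    apply div_nonneg <;> linarith
  have step2 : ((1 - s) / (1 + s)) ^ (p - 2) = (((1 - s) / (1 + s)) ^ (2:ℕ)) ^ (p / 2 - 1) := by
    rw [← Real.rpow_natCast ((1 - s) / (1 + s)) 2, ← Real.rpow_mul hbase0]
    norm_num
    ring_nf
  have step3 : (((1 - s) / (1 + s)) ^ (2:ℕ)) ≤ (A - 2 * s) / (A + 2 * s) := by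
    rw [div_pow, div_le_div_iff₀ (by positivity) hApos]
    nlinarith [hA1, hs0, mul_nonneg hs0 (sq_nonneg s)]
  have step4 : (((1 - s) / (1 + s)) ^ (2:ℕ)) ^ (p / 2 - 1) ≤ ((A - 2 * s) / (A + 2 * s)) ^ (p / 2 - 1) :=
    Real.rpow_le_rpow (by positivity) step3 hq
  calc (1 - (p - 2) * s) / (1 + (p - 2) * s) ≤ ((1 - s) / (1 + s)) ^ (p - 2) := step1
    _ = (((1 - s) / (1 + s)) ^ (2:ℕ)) ^ (p / 2 - 1) := step2
    _ ≤ ((A - 2 * s) / (A + 2 * s)) ^ (p / 2 - 1) := step4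
end

section
/- For p ≥ 3, u ∈ ℝ, and b ∈ [1/(p-1), 1], the map b ↦ (1+bu²(p-2)+2u√(1-b))^{p/2} + (1+bu²(p-2)-2u√(1-b))^{p/2} is monotonically nondecreasing on [1/(p-1), 1]. -/
open Real

lemma amgm_step (m ρ : ℝ) (hm : 1 ≤ m) (hρ : 1 ≤ ρ) :
    m * ρ ^ (m - 1) ≤ 1 + (m - 1) * ρ ^ m := by
  have hm0 : (0:ℝ) < m := by linarith
  have hρ0 : (0:ℝ) < ρ := by linarith
  have hm1 : (0:ℝ) ≤ m - 1 := by linarith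
  have h := Real.geom_mean_le_arith_mean2_weighted
    (by positivity : (0:ℝ) ≤ (m-1)/m) (by positivity : (0:ℝ) ≤ 1/m)
    (by positivity : (0:ℝ) ≤ ρ ^ m) (zero_le_one)
    (by field_simp; ring)
  rw [Real.one_rpow, mul_one, ← Real.rpow_mul (le_of_lt hρ0)] at h
  have hme : m * ((m-1)/m) = m - 1 := by field_simp
  rw [hme] at h
  have := mul_le_mul_of_nonneg_left h (le_of_lt hm0)
  calc m * ρ ^ (m-1) ≤ m * ((m-1)/m * ρ ^ m + 1/m * 1) := this
    _ = 1 + (m - 1) * ρ ^ m := by field_simp; ring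

lemma L1 (m : ℝ) (hm : 1 ≤ m) : ∀ ρ ≥ (1:ℝ),
    (ρ + 1) * (ρ ^ m - 1) ≤ m * (ρ - 1) * (ρ ^ m + 1) := by
  set h : ℝ → ℝ := fun ρ => m * (ρ - 1) * (ρ ^ m + 1) - (ρ + 1) * (ρ ^ m - 1) with hh
  set g : ℝ → ℝ := fun ρ =>
    m * ((ρ ^ m + 1) + (ρ - 1) * (m * ρ ^ (m-1)))
      - ((ρ ^ m - 1) + (ρ + 1) * (m * ρ ^ (m-1))) with hg
  have hderiv : ∀ ρ : ℝ, 1 ≤ ρ → HasDerivAt h (g ρ) ρ := by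
    intro ρ hρ
    have hρ0 : ρ ≠ 0 := by intro h0; rw [h0] at hρ; norm_num at hρ
    have hrp : HasDerivAt (fun x : ℝ => x ^ m) (m * ρ ^ (m-1)) ρ :=
      Real.hasDerivAt_rpow_const (Or.inl hρ0)
    have h1 : HasDerivAt (fun x : ℝ => m * (x - 1) * (x ^ m + 1))
        (m * 1 * (ρ ^ m + 1) + m * (ρ - 1) * (m * ρ ^ (m-1))) ρ := by
      exact (((hasDerivAt_id ρ).sub_const 1).const_mul m).mul (hrp.add_const 1)
    have h2 : HasDerivAt (fun x : ℝ => (x + 1) * (x ^ m - 1))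
        (1 * (ρ ^ m - 1) + (ρ + 1) * (m * ρ ^ (m-1))) ρ :=
      ((hasDerivAt_id ρ).add_const 1).mul (hrp.sub_const 1)
    have h3 := h1.sub h2
    refine HasDerivAt.congr_deriv h3 ?_
    simp only [hg]
    ring
  have hgnn : ∀ ρ : ℝ, 1 ≤ ρ → 0 ≤ g ρ := by
    intro ρ hρ
    have hρ0 : (0:ℝ) < ρ := by linarith
    have hkey := amgm_step m ρ hm hρ
    have hmul : ρ ^ (m - 1) * ρ = ρ ^ m := by
      rw [← Real.rpow_add_one hρ0.ne']
      norm_num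
    simp only [hg]
    have hid : m * (ρ ^ m + 1 + (ρ - 1) * (m * ρ ^ (m - 1))) - (ρ ^ m - 1 + (ρ + 1) * (m * ρ ^ (m - 1)))
        = (m+1) * ((1 + (m-1) * ρ ^ m) - m * ρ ^ (m-1)) := by
      linear_combination (m^2 - m) * hmul
    rw [hid]
    have : (0:ℝ) ≤ (1 + (m-1) * ρ ^ m) - m * ρ ^ (m-1) := by linarith
    positivity
  -- h is monotone on Ici 1
  have hcont : ContinuousOn h (Set.Ici 1) := by
    intro x hx
    have hx0 : x ≠ 0 := by intro h0; simp [h0] at hx; linarith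
    have : ContinuousAt h x := by
      have hc : ContinuousAt (fun x : ℝ => x ^ m) x :=
        Real.continuousAt_rpow_const x m (Or.inl hx0)
      exact (((continuousAt_const.mul ((continuousAt_id.sub continuousAt_const))).mul
        (hc.add continuousAt_const)).sub
        ((continuousAt_id.add continuousAt_const).mul (hc.sub continuousAt_const)))
    exact this.continuousWithinAt
  have hmono : MonotoneOn h (Set.Ici 1) := by
    apply monotoneOn_of_hasDerivWithinAt_nonneg (convex_Ici 1) hcont
      (f' := g)
    · intro x hx
      rw [interior_Ici] at hx
      exact ((hderiv x (le_of_lt hx)).hasDerivWithinAt)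
    · intro x hx
      rw [interior_Ici] at hx
      exact hgnn x (le_of_lt hx)
  intro ρ hρ
  have := hmono (Set.self_mem_Ici) (hρ : ρ ∈ Set.Ici 1) hρ
  simp only [hh, Real.one_rpow] at this
  nlinarith [this]

lemma L2 (m t c : ℝ) (hm : 1 ≤ m) (ht : 0 ≤ t) (hc : 1 + t^2/4 ≤ c) :
    (c + t) ^ (m/2) - (c - t) ^ (m/2)
      ≤ (m * t / 2) * ((c + t) ^ (m/2) + (c - t) ^ (m/2)) := by
  have hA0 : (0:ℝ) ≤ c + t := by nlinarith
  have hB0 : (0:ℝ) ≤ c - t := by nlinarith [sq_nonneg (t - 2)]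
  have hq : (0:ℝ) ≤ m/2 := by linarith
  have hX0 : (0:ℝ) ≤ (c + t) ^ (m/2) := Real.rpow_nonneg hA0 _
  have hY0 : (0:ℝ) ≤ (c - t) ^ (m/2) := Real.rpow_nonneg hB0 _
  rcases le_or_gt 2 t with h2t | ht2
  · -- t ≥ 2 : m*t/2 ≥ 1
    have hlam : (1:ℝ) ≤ m * t / 2 := by nlinarith
    nlinarith [mul_nonneg (by linarith : (0:ℝ) ≤ m*t/2 - 1)
      (by linarith : (0:ℝ) ≤ (c + t) ^ (m/2) + (c - t) ^ (m/2))]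
  · rcases eq_or_lt_of_le ht with h0 | ht0
    · rw [← h0]; simp
    -- 0 < t < 2
    have hB : (0:ℝ) < c - t := by nlinarith [mul_pos (by linarith : (0:ℝ) < 2 - t) (by linarith : (0:ℝ) < 2 - t)]
    have h2mt : (0:ℝ) < 2 - t := by linarith
    obtain ⟨ρ, hρdef⟩ : ∃ ρ : ℝ, ρ = (2 + t) / (2 - t) := ⟨_, rfl⟩
    have hρ1 : (1:ℝ) ≤ ρ := by
      rw [hρdef, le_div_iff₀ h2mt]; linarith
    have hρ0 : (0:ℝ) < ρ := by linarith
    have h1 := L1 m hm ρ hρ1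
    have hρid : 2 * (ρ - 1) = t * (ρ + 1) := by
      rw [hρdef]; field_simp; ring
    have hρpos : (0:ℝ) < ρ + 1 := by linarith
    have hstep : ρ ^ m - 1 ≤ m * t / 2 * (ρ ^ m + 1) := by
      have h' : (ρ + 1) * (ρ ^ m - 1) ≤ (ρ + 1) * (m * t / 2 * (ρ ^ m + 1)) := by
        have heq : (ρ + 1) * (m * t / 2 * (ρ ^ m + 1)) = m * (ρ - 1) * (ρ ^ m + 1) := by
          linear_combination (-(m/2)) * (ρ ^ m + 1) * hρid
        rw [heq]; exact h1
      exact le_of_mul_le_mul_left h' hρpos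
    have hAB : (c + t) * (2 - t)^2 ≤ (c - t) * (2 + t)^2 := by nlinarith
    have hABρ : c + t ≤ (c - t) * ρ^2 := by
      rw [hρdef, div_pow, mul_div_assoc', le_div_iff₀ (by positivity)]
      linarith
    have hXY : (c + t) ^ (m/2) ≤ (c - t) ^ (m/2) * ρ ^ m := by
      calc (c + t) ^ (m/2) ≤ ((c - t) * ρ^2) ^ (m/2) :=
            Real.rpow_le_rpow hA0 hABρ hq
        _ = (c - t) ^ (m/2) * (ρ^2) ^ (m/2) :=
            Real.mul_rpow hB.le (by positivity)
        _ = (c - t) ^ (m/2) * ρ ^ m := by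
            have h2q : ((ρ^2 : ℝ)) ^ (m/2) = ρ ^ m := by
              rw [← Real.rpow_natCast ρ 2, ← Real.rpow_mul hρ0.le]
              push_cast
              rw [show (2:ℝ)*(m/2) = m by ring]
            rw [h2q]
    have hP1 : (1:ℝ) ≤ ρ ^ m := Real.one_le_rpow hρ1 (by linarith)
    rcases le_or_gt 1 (m * t / 2) with hlam | hlam
    · nlinarith [mul_nonneg (by linarith : (0:ℝ) ≤ m*t/2 - 1)
        (by linarith : (0:ℝ) ≤ (c + t) ^ (m/2) + (c - t) ^ (m/2))]
    · nlinarith [mul_nonneg (by linarith : (0:ℝ) ≤ 1 - m*t/2)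
        (by linarith : (0:ℝ) ≤ (c - t) ^ (m/2) * ρ ^ m - (c + t) ^ (m/2)),
        mul_nonneg hY0
        (by linarith : (0:ℝ) ≤ m*t/2 * (ρ ^ m + 1) - (ρ ^ m - 1))]

lemma keyLem (m s u c : ℝ) (hm : 1 ≤ m) (hs : 0 < s) (hc : 1 + (u*s)^2 ≤ c) :
    0 ≤ (c + 2*u*s) ^ (m/2) * (s*(u^2*m) - u) + (c - 2*u*s) ^ (m/2) * (s*(u^2*m) + u) := by
  rcases le_or_gt 0 u with hu | hu
  · have ht : 0 ≤ 2*u*s := by positivity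
    have hc' : 1 + (2*u*s)^2/4 ≤ c := by nlinarith [hc]
    have h := L2 m (2*u*s) c hm ht hc'
    have hid : (c + 2*u*s) ^ (m/2) * (s*(u^2*m) - u) + (c - 2*u*s) ^ (m/2) * (s*(u^2*m) + u)
        = u * ( m*(2*u*s)/2 * ((c + 2*u*s)^(m/2) + (c - 2*u*s)^(m/2))
            - ((c + 2*u*s)^(m/2) - (c - 2*u*s)^(m/2)) ) := by ring
    rw [hid]
    exact mul_nonneg hu (by linarith)
  · have ht : 0 ≤ -(2*u*s) := by nlinarith
    have hc' : 1 + (-(2*u*s))^2/4 ≤ c := by nlinarith [hc]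
    have h := L2 m (-(2*u*s)) c hm ht hc'
    have e1 : c + -(2*u*s) = c - 2*u*s := by ring
    have e2 : c - -(2*u*s) = c + 2*u*s := by ring
    rw [e1, e2] at h
    have hid : (c + 2*u*s) ^ (m/2) * (s*(u^2*m) - u) + (c - 2*u*s) ^ (m/2) * (s*(u^2*m) + u)
        = (-u) * ( m*(-(2*u*s))/2 * ((c - 2*u*s)^(m/2) + (c + 2*u*s)^(m/2))
            - ((c - 2*u*s)^(m/2) - (c + 2*u*s)^(m/2)) ) := by ring
    rw [hid]
    exact mul_nonneg (by linarith) (by linarith)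

theorem stmt_6 (p u : ℝ) (hp : 3 ≤ p) :
    MonotoneOn (fun b : ℝ =>
      (1 + b * u ^ 2 * (p - 2) + 2 * u * Real.sqrt (1 - b)) ^ (p / 2)
        + (1 + b * u ^ 2 * (p - 2) - 2 * u * Real.sqrt (1 - b)) ^ (p / 2))
      (Set.Icc (1 / (p - 1)) 1) := by
  have hp1 : (0:ℝ) < p - 1 := by linarith
  -- derivative construction on the interior
  have hderiv : ∀ b : ℝ, b ∈ Set.Ioo (1/(p-1)) 1 →
      HasDerivAt (fun b : ℝ =>
        (1 + b * u ^ 2 * (p - 2) + 2 * u * Real.sqrt (1 - b)) ^ (p / 2)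
          + (1 + b * u ^ 2 * (p - 2) - 2 * u * Real.sqrt (1 - b)) ^ (p / 2))
      ((p/(2*Real.sqrt (1-b))) *
        ((1 + b * u ^ 2 * (p - 2) + 2 * u * Real.sqrt (1 - b)) ^ ((p-2)/2)
            * (Real.sqrt (1-b) * (u^2*(p-2)) - u)
          + (1 + b * u ^ 2 * (p - 2) - 2 * u * Real.sqrt (1 - b)) ^ ((p-2)/2)
            * (Real.sqrt (1-b) * (u^2*(p-2)) + u))) b := by
    intro b hb
    have hb1 : 0 < 1 - b := by linarith [hb.2]
    have hs : 0 < Real.sqrt (1 - b) := Real.sqrt_pos.mpr hb1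
    have h1 : HasDerivAt (fun x : ℝ => 1 - x) (-1) b := by
      simpa using (hasDerivAt_id b).const_sub 1
    have hsq : HasDerivAt (fun x : ℝ => Real.sqrt (1 - x))
        (1 / (2 * Real.sqrt (1 - b)) * -1) b :=
      HasDerivAt.comp b (Real.hasDerivAt_sqrt hb1.ne') h1
    have hm1 : HasDerivAt (fun x : ℝ => 1 + x * u ^ 2 * (p - 2)) (u^2*(p-2)) b := by
      simpa using (((hasDerivAt_id b).mul_const (u^2)).mul_const (p-2)).const_add 1
    have hA : HasDerivAt (fun x : ℝ => 1 + x * u ^ 2 * (p - 2) + 2 * u * Real.sqrt (1 - x))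
        (u^2*(p-2) + 2*u*(1 / (2 * Real.sqrt (1 - b)) * -1)) b :=
      hm1.add (hsq.const_mul (2*u))
    have hB : HasDerivAt (fun x : ℝ => 1 + x * u ^ 2 * (p - 2) - 2 * u * Real.sqrt (1 - x))
        (u^2*(p-2) - 2*u*(1 / (2 * Real.sqrt (1 - b)) * -1)) b :=
      hm1.sub (hsq.const_mul (2*u))
    have hrpA : HasDerivAt (fun y : ℝ => y ^ (p/2))
        ((p/2) * (1 + b * u ^ 2 * (p - 2) + 2 * u * Real.sqrt (1 - b)) ^ (p/2 - 1))
        (1 + b * u ^ 2 * (p - 2) + 2 * u * Real.sqrt (1 - b)) :=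
      Real.hasDerivAt_rpow_const (Or.inr (by linarith))
    have hrpB : HasDerivAt (fun y : ℝ => y ^ (p/2))
        ((p/2) * (1 + b * u ^ 2 * (p - 2) - 2 * u * Real.sqrt (1 - b)) ^ (p/2 - 1))
        (1 + b * u ^ 2 * (p - 2) - 2 * u * Real.sqrt (1 - b)) :=
      Real.hasDerivAt_rpow_const (Or.inr (by linarith))
    have hfA := HasDerivAt.comp b hrpA hA
    have hfB := HasDerivAt.comp b hrpB hB
    have hsum := hfA.add hfB
    have hexp : p/2 - 1 = (p-2)/2 := by ring
    rw [hexp] at hsum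
    refine HasDerivAt.congr_deriv hsum ?_
    have hsne : Real.sqrt (1 - b) ≠ 0 := hs.ne'
    field_simp
    ring
  apply monotoneOn_of_deriv_nonneg (convex_Icc _ _)
  · -- continuity
    have hrc : Continuous fun x : ℝ => x ^ (p/2) :=
      Real.continuous_rpow_const (by linarith)
    have hin1 : Continuous fun b : ℝ => 1 + b * u ^ 2 * (p - 2) + 2 * u * Real.sqrt (1 - b) := by
      apply Continuous.add
      · fun_prop
      · exact continuous_const.mul (Real.continuous_sqrt.comp (by fun_prop))
    have hin2 : Continuous fun b : ℝ => 1 + b * u ^ 2 * (p - 2) - 2 * u * Real.sqrt (1 - b) := by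
      apply Continuous.sub
      · fun_prop
      · exact continuous_const.mul (Real.continuous_sqrt.comp (by fun_prop))
    exact ((hrc.comp hin1).add (hrc.comp hin2)).continuousOn
  · -- differentiability on the interior
    rw [interior_Icc]
    intro b hb
    exact ((hderiv b hb).differentiableAt).differentiableWithinAt
  · -- nonnegativity of the derivative
    rw [interior_Icc]
    intro b hb
    rw [(hderiv b hb).deriv]
    have hb1 : 0 < 1 - b := by linarith [hb.2]
    have hs : 0 < Real.sqrt (1 - b) := Real.sqrt_pos.mpr hb1
    have hm : (1:ℝ) ≤ p - 2 := by linarith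
    have hble : 1 ≤ b * (p - 1) := by
      have := hb.1
      rw [div_lt_iff₀ hp1] at this
      linarith
    have hs2 : Real.sqrt (1 - b) ^ 2 = 1 - b := Real.sq_sqrt hb1.le
    have hc : 1 + (u * Real.sqrt (1 - b))^2 ≤ 1 + b * u ^ 2 * (p - 2) := by
      have h1b : 1 - b ≤ b * (p - 2) := by linarith
      have := mul_le_mul_of_nonneg_left h1b (sq_nonneg u)
      nlinarith [hs2, sq_nonneg u]
    have hkey := keyLem (p-2) (Real.sqrt (1-b)) u (1 + b * u ^ 2 * (p - 2)) hm hs hc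
    have e1 : 1 + b * u ^ 2 * (p - 2) + 2 * u * Real.sqrt (1 - b)
        = (1 + b * u ^ 2 * (p - 2)) + 2 * u * Real.sqrt (1 - b) := by ring
    have e2 : 1 + b * u ^ 2 * (p - 2) - 2 * u * Real.sqrt (1 - b)
        = (1 + b * u ^ 2 * (p - 2)) - 2 * u * Real.sqrt (1 - b) := by ring
    apply mul_nonneg
    · positivity
    · rw [e1, e2]
      convert hkey using 3 <;> ring
end

section
/- Let f, g : ℝ → [0,∞) be continuous unimodal functions with f = 0 outside (a,b), g = 0 outside (a',b'), where a' ≤ a < b' ≤ b. Suppose x₀ ∈ (a, b') is a common global maximum point with f(x₀) = g(x₀), there exists c ∈ (x₀, b') with g ≥ f on [a', c] and g ≤ f on [c, b], and ∫_{x₀}^{b'} g ≥ ∫_{x₀}^{b} f. Then for every t ∈ [0, b-a], the maximum of ∫_I f over intervals I ⊆ [a,b] of length t is at most the maximum of ∫_I g over all intervals I ⊆ ℝ of length t. -/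
theorem stmt_7 (f g : ℝ → ℝ) (a b a' b' x₀ c : ℝ)
    (hf0 : ∀ x, 0 ≤ f x) (hg0 : ∀ x, 0 ≤ g x)
    (hfc : Continuous f) (hgc : Continuous g)
    (hfsupp : ∀ x, x ∉ Set.Ioo a b → f x = 0)
    (hgsupp : ∀ x, x ∉ Set.Ioo a' b' → g x = 0)
    (horder : a' ≤ a ∧ a < b' ∧ b' ≤ b)
    (hx₀ : x₀ ∈ Set.Ioo a b')
    (hfmono : MonotoneOn f (Set.Iic x₀)) (hfanti : AntitoneOn f (Set.Ici x₀))
    (hgmono : MonotoneOn g (Set.Iic x₀)) (hganti : AntitoneOn g (Set.Ici x₀))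
    (hmax : f x₀ = g x₀)
    (hc : c ∈ Set.Ioo x₀ b')
    (hge : ∀ x ∈ Set.Icc a' c, f x ≤ g x)
    (hle : ∀ x ∈ Set.Icc c b, g x ≤ f x)
    (harea : ∫ x in x₀..b, f x ≤ ∫ x in x₀..b', g x) :
    ∀ t ∈ Set.Icc (0:ℝ) (b - a), ∀ α : ℝ, a ≤ α → α + t ≤ b →
      (∫ x in α..(α + t), f x) ≤ ⨆ γ : ℝ, ∫ x in γ..(γ + t), g x := by
  obtain ⟨ha'a, hab', hb'b⟩ := horder
  obtain ⟨hax₀, hx₀b'⟩ := hx₀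
  obtain ⟨hx₀c, hcb'⟩ := hc
  intro t ht α hαa hαtb
  obtain ⟨ht0, htba⟩ := ht
  have hfi : ∀ u v : ℝ, IntervalIntegrable f MeasureTheory.volume u v :=
    fun u v => hfc.intervalIntegrable u v
  have hgi : ∀ u v : ℝ, IntervalIntegrable g MeasureTheory.volume u v :=
    fun u v => hgc.intervalIntegrable u v
  -- pointwise comparisons
  have hfg_left : ∀ x, x ≤ c → f x ≤ g x := by
    intro x hx
    rcases le_or_gt a' x with h | h
    · exact hge x ⟨h, hx⟩
    · have : f x = 0 := hfsupp x (by
        simp only [Set.mem_Ioo, not_and, not_lt]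
        intro h'; linarith)
      rw [this]; exact hg0 x
  have hgf_right : ∀ x, c ≤ x → g x ≤ f x := by
    intro x hx
    rcases le_or_gt x b with h | h
    · exact hle x ⟨hx, h⟩
    · have : g x = 0 := hgsupp x (by
        simp only [Set.mem_Ioo, not_and, not_lt]
        intro h'; linarith)
      rw [this]; exact hf0 x
  have hgz : ∀ x, b' ≤ x → g x = 0 := by
    intro x hx
    exact hgsupp x (by
      simp only [Set.mem_Ioo, not_and, not_lt]
      intro h'; exact hx)
  -- core: window containing x₀ with right end ≤ b
  have core : ∀ u v : ℝ, u ≤ x₀ → x₀ ≤ v → v ≤ b →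
      (∫ x in u..v, f x) ≤ ∫ x in u..v, g x := by
    intro u v hu hv hvb
    have h1 : (∫ x in u..x₀, f x) ≤ ∫ x in u..x₀, g x :=
      intervalIntegral.integral_mono_on hu (hfi u x₀) (hgi u x₀)
        (fun x hx => hfg_left x (le_trans hx.2 hx₀c.le))
    have h2 : (∫ x in x₀..v, f x) ≤ ∫ x in x₀..v, g x := by
      rcases le_or_gt v c with hvc | hvc
      · exact intervalIntegral.integral_mono_on hv (hfi _ _) (hgi _ _)
          (fun x hx => hfg_left x (le_trans hx.2 hvc))
      rcases le_or_gt v b' with hvb' | hvb'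
      · -- x₀ < c ≤ v ≤ b'
        have e1 : (∫ x in x₀..v, f x) + ∫ x in v..b, f x = ∫ x in x₀..b, f x :=
          intervalIntegral.integral_add_adjacent_intervals (hfi _ _) (hfi _ _)
        have e2 : (∫ x in x₀..v, g x) + ∫ x in v..b', g x = ∫ x in x₀..b', g x :=
          intervalIntegral.integral_add_adjacent_intervals (hgi _ _) (hgi _ _)
        have h3 : (∫ x in v..b', g x) ≤ ∫ x in v..b', f x :=
          intervalIntegral.integral_mono_on hvb' (hgi _ _) (hfi _ _)
            (fun x hx => hgf_right x (le_trans hvc.le hx.1))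
        have e3 : (∫ x in v..b', f x) + ∫ x in b'..b, f x = ∫ x in v..b, f x :=
          intervalIntegral.integral_add_adjacent_intervals (hfi _ _) (hfi _ _)
        have h4 : (0:ℝ) ≤ ∫ x in b'..b, f x :=
          intervalIntegral.integral_nonneg hb'b (fun x _ => hf0 x)
        linarith
      · -- b' < v ≤ b
        have e1 : (∫ x in x₀..v, f x) + ∫ x in v..b, f x = ∫ x in x₀..b, f x :=
          intervalIntegral.integral_add_adjacent_intervals (hfi _ _) (hfi _ _)
        have h4 : (0:ℝ) ≤ ∫ x in v..b, f x :=
          intervalIntegral.integral_nonneg hvb (fun x _ => hf0 x)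
        have e2 : (∫ x in x₀..b', g x) + ∫ x in b'..v, g x = ∫ x in x₀..v, g x :=
          intervalIntegral.integral_add_adjacent_intervals (hgi _ _) (hgi _ _)
        have h5 : (∫ x in b'..v, g x) = 0 := by
          have : (∫ x in b'..v, g x) = ∫ x in b'..v, (0:ℝ) :=
            intervalIntegral.integral_congr (fun x hx => by
              rw [Set.uIcc_of_le hvb'.le] at hx
              exact hgz x hx.1)
          rw [this, intervalIntegral.integral_zero]
        linarith
    have ef : (∫ x in u..x₀, f x) + ∫ x in x₀..v, f x = ∫ x in u..v, f x :=
      intervalIntegral.integral_add_adjacent_intervals (hfi _ _) (hfi _ _)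
    have eg : (∫ x in u..x₀, g x) + ∫ x in x₀..v, g x = ∫ x in u..v, g x :=
      intervalIntegral.integral_add_adjacent_intervals (hgi _ _) (hgi _ _)
    linarith
  -- boundedness of the sup
  obtain ⟨z, hz, hzmax⟩ : ∃ z ∈ Set.Icc a' b', ∀ y ∈ Set.Icc a' b', g y ≤ g z := by
    have hne : (Set.Icc a' b').Nonempty := ⟨a', ⟨le_refl _, by linarith⟩⟩
    obtain ⟨z, hz, hzm⟩ := isCompact_Icc.exists_isMaxOn hne (hgc.continuousOn)
    exact ⟨z, hz, fun y hy => hzm hy⟩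
  have hM : ∀ x, g x ≤ g z := by
    intro x
    rcases le_or_gt a' x with h1 | h1
    · rcases le_or_gt x b' with h2 | h2
      · exact hzmax x ⟨h1, h2⟩
      · rw [hgz x h2.le]; exact hg0 z
    · have : g x = 0 := hgsupp x (by
        simp only [Set.mem_Ioo, not_and, not_lt]
        intro h'; linarith)
      rw [this]; exact hg0 z
  have hbdd : BddAbove (Set.range fun γ : ℝ => ∫ x in γ..(γ + t), g x) := by
    refine ⟨t * g z, ?_⟩
    rintro _ ⟨γ, rfl⟩
    have h1 : (∫ x in γ..(γ + t), g x) ≤ ∫ x in γ..(γ + t), g z :=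
      intervalIntegral.integral_mono_on (by linarith) (hgi _ _)
        (intervalIntegrable_const) (fun x _ => hM x)
    have h2 : (∫ x in γ..(γ + t), (g z : ℝ)) = t * g z := by
      rw [intervalIntegral.integral_const]
      simp [smul_eq_mul]
    rw [h2] at h1
    exact h1
  -- final case analysis
  rcases le_or_gt α x₀ with h1 | h1
  · rcases le_or_gt x₀ (α + t) with h2 | h2
    · exact le_trans (core α (α + t) h1 h2 hαtb) (le_ciSup hbdd α)
    · -- α + t < x₀ : shift right to [x₀ - t, x₀]
      have hshift : (∫ x in α..(α + t), f x) ≤ ∫ x in (x₀ - t)..(x₀ - t + t), f x := by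
        have heq : x₀ - t + t = x₀ := by ring
        rw [heq]
        set d := x₀ - (α + t) with hd
        have hd0 : 0 ≤ d := by simp only [hd]; linarith
        have hcomp : (∫ x in (x₀ - t)..x₀, f (x - d)) = ∫ x in α..(α + t), f x := by
          rw [intervalIntegral.integral_comp_sub_right f d]
          congr 1 <;> simp only [hd] <;> ring
        rw [← hcomp]
        refine intervalIntegral.integral_mono_on (by linarith)
          ((hfc.comp (continuous_id.sub continuous_const)).intervalIntegrable _ _)
          (hfi _ _) ?_
        intro x hx
        have hx2 : x ≤ x₀ := hx.2
        exact hfmono (by simp only [Set.mem_Iic]; linarith) hx2 (by linarith)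
      have hcore : (∫ x in (x₀ - t)..(x₀ - t + t), f x) ≤ ∫ x in (x₀ - t)..(x₀ - t + t), g x := by
        have heq : x₀ - t + t = x₀ := by ring
        rw [heq]
        exact core (x₀ - t) x₀ (by linarith) le_rfl (by linarith)
      exact le_trans hshift (le_trans hcore (le_ciSup hbdd (x₀ - t)))
  · -- x₀ < α : shift left to [x₀, x₀ + t]
    have hshift : (∫ x in α..(α + t), f x) ≤ ∫ x in x₀..(x₀ + t), f x := by
      set d := α - x₀ with hd
      have hd0 : 0 ≤ d := by simp only [hd]; linarith
      have hcomp : (∫ x in x₀..(x₀ + t), f (x + d)) = ∫ x in α..(α + t), f x := by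
        rw [intervalIntegral.integral_comp_add_right f d]
        congr 1 <;> simp only [hd] <;> ring
      rw [← hcomp]
      refine intervalIntegral.integral_mono_on (by linarith)
        ((hfc.comp (continuous_id.add continuous_const)).intervalIntegrable _ _)
        (hfi _ _) ?_
      intro x hx
      have hx1 : x₀ ≤ x := hx.1
      exact hfanti (Set.mem_Ici.mpr hx1) (by simp only [Set.mem_Ici]; linarith) (by linarith)
    have hcore : (∫ x in x₀..(x₀ + t), f x) ≤ ∫ x in x₀..(x₀ + t), g x :=
      core x₀ (x₀ + t) le_rfl (by linarith) (by linarith)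
    exact le_trans hshift (le_trans hcore (le_ciSup hbdd x₀))
end

section
/- Let 1 ≤ p ≤ q < ∞ and z ∈ ℂ. If for all a, b ∈ ℂ the two-point inequality ((|a+zb|^q + |a-zb|^q)/2)^{1/q} ≤ ((|a+b|^p + |a-b|^p)/2)^{1/p} holds, then |p - 2 - z²(q-2)| ≤ p - |z|²q. -/
open Filter Topology Real

lemma re_sq (w : ℂ) : w.re^2 = (‖w‖^2 + (w^2).re)/2 := by
  rw [Complex.sq_norm, Complex.normSq_apply]
  simp [pow_two, Complex.mul_re]

lemma norm_rpow_eq (u : ℂ) (r t : ℝ) :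
    ‖1 + (t:ℂ)*u‖ ^ r = (1 + 2*u.re*t + ‖u‖^2*t^2) ^ (r/2) := by
  have h2 : ‖1 + (t:ℂ)*u‖^(2:ℕ) = 1 + 2*u.re*t + ‖u‖^2*t^2 := by
    rw [Complex.sq_norm, Complex.normSq_apply, Complex.sq_norm, Complex.normSq_apply]
    simp [Complex.add_re, Complex.add_im, Complex.mul_re, Complex.mul_im]
    ring
  rw [← h2, ← Real.rpow_natCast ‖1 + (t:ℂ)*u‖ 2, ← Real.rpow_mul (norm_nonneg _)]
  norm_num
  congr 1
  ring

lemma neg_tendsto_punctured : Tendsto (fun t : ℝ => -t) (𝓝[≠] 0) (𝓝[≠] 0) := by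
  refine Tendsto.inf ?_ (Filter.tendsto_principal_principal.mpr ?_)
  · simpa using (continuous_neg.tendsto (0:ℝ))
  · intro x hx; simpa using hx


lemma keyA (p c m : ℝ) (hp : 1 ≤ p) (hm : 0 ≤ m) (F : ℝ → ℝ)
    (hF : ∀ t : ℝ, F t =
      (((1 + 2*c*t + m*t^2) ^ (p/2) + (1 + 2*c*(-t) + m*(-t)^2) ^ (p/2)) / 2) ^ (1/p)) :
    Tendsto (fun t : ℝ => (F t - 1) / t^2) (𝓝[≠] (0:ℝ))
      (𝓝 (((p-2)*c^2 + m)/2)) := by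
  have hp0 : (0:ℝ) < p := lt_of_lt_of_le one_pos hp
  set base : ℝ → ℝ := fun t => 1 + 2*c*t + m*t^2 with hbase
  -- positivity of base near 0
  set δ : ℝ := 1/(2*|c|+1) with hδ
  have hδ0 : 0 < δ := by positivity
  have hpos : ∀ t : ℝ, |t| < δ → 0 < base t := by
    intro t ht
    have he : |2*c*t| = 2*(abs c)*(abs t) := by rw [abs_mul, abs_mul]; simp
    have h2 : 2*(abs c)*(abs t) < 1 := by
      have h3 : 2*(abs c)*(abs t) ≤ 2*(abs c)*δ :=
        mul_le_mul_of_nonneg_left ht.le (by positivity)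
      have h4 : 2*(abs c)*δ < 1 := by
        rw [hδ]
        rw [mul_one_div, div_lt_one (by positivity)]
        linarith
      linarith
    have h3 : 0 ≤ m*t^2 := by positivity
    have h4 := neg_abs_le (2*c*t)
    simp only [hbase]
    nlinarith
  -- derivative of base
  have hbd : ∀ t : ℝ, HasDerivAt base (2*c + 2*m*t) t := by
    intro t
    have h1 := (((hasDerivAt_const t (1:ℝ)).add ((hasDerivAt_id t).const_mul (2*c))).add
        ((hasDerivAt_pow 2 t).const_mul m))
    refine h1.congr_deriv ?_
    push_cast
    ring
  -- χ = derivative of ψ := base ^ (p/2)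
  set χ : ℝ → ℝ := fun t => (2*c + 2*m*t) * (p/2) * base t ^ (p/2 - 1) with hχ
  have hψd : ∀ t : ℝ, 0 < base t → HasDerivAt (fun s => base s ^ (p/2)) (χ t) t :=
    fun t ht => (hbd t).rpow_const (Or.inl ht.ne')
  set A : ℝ := p*(p-2)*c^2 + p*m with hA
  have hb0 : base 0 = 1 := by simp [hbase]
  have hχd : HasDerivAt χ A 0 := by
    have h1 : HasDerivAt (fun t : ℝ => (2*c + 2*m*t) * (p/2)) (2*m*(p/2)) 0 := by
      have h0 := (((hasDerivAt_const (0:ℝ) (2*c)).add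
        ((hasDerivAt_id (0:ℝ)).const_mul (2*m)))).mul_const (p/2)
      refine h0.congr_deriv ?_
      ring
    have h2 : HasDerivAt (fun t : ℝ => base t ^ (p/2 - 1))
        ((2*c + 2*m*0) * (p/2-1) * base 0 ^ (p/2-1-1)) 0 :=
      (hbd 0).rpow_const (Or.inl (by rw [hb0]; norm_num))
    have h3 := h1.mul h2
    refine h3.congr_deriv ?_
    rw [hb0]
    simp only [Real.one_rpow]
    ring
  have hslope : Tendsto (slope χ 0) (𝓝[≠] 0) (𝓝 A) := hasDerivAt_iff_tendsto_slope.mp hχd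
  have hslopeneg : Tendsto (fun t => slope χ 0 (-t)) (𝓝[≠] 0) (𝓝 A) :=
    hslope.comp neg_tendsto_punctured
  set Φ : ℝ → ℝ := fun t => (base t ^ (p/2) + base (-t) ^ (p/2))/2 with hΦdef
  have hΦpos : ∀ t : ℝ, |t| < δ → 0 < Φ t := by
    intro t ht
    have h1 := Real.rpow_pos_of_pos (hpos t ht) (p/2)
    have h2 := Real.rpow_pos_of_pos (hpos (-t) (by rwa [abs_neg])) (p/2)
    simp only [hΦdef]
    positivity
  set Φd : ℝ → ℝ := fun t => (χ t + χ (-t) * (-1))/2 with hΦddef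
  have hΦd : ∀ t : ℝ, |t| < δ → HasDerivAt Φ (Φd t) t := by
    intro t ht
    have h1 := hψd t (hpos t ht)
    have h2 := HasDerivAt.comp t (hψd (-t) (hpos (-t) (by rwa [abs_neg]))) (hasDerivAt_neg t)
    exact (h1.add h2).div_const 2
  set G : ℝ → ℝ := fun t => Φ t ^ (1/p) with hGdef
  set Gd : ℝ → ℝ := fun t => Φd t * (1/p) * Φ t ^ (1/p - 1) with hGddef
  have hGd : ∀ t : ℝ, |t| < δ → HasDerivAt G (Gd t) t := fun t ht =>
    (hΦd t ht).rpow_const (Or.inl (hΦpos t ht).ne')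
  have hΦ0 : Φ 0 = 1 := by
    simp only [hΦdef, neg_zero, hb0, Real.one_rpow]
    norm_num
  have hG0 : G 0 = 1 := by rw [hGdef]; simp only [hΦ0, Real.one_rpow]
  have hev : ∀ᶠ t in 𝓝 (0:ℝ), |t| < δ := by
    have hball : Metric.ball (0:ℝ) δ ∈ 𝓝 (0:ℝ) := Metric.ball_mem_nhds _ hδ0
    filter_upwards [hball] with t ht
    simpa [Real.dist_eq] using ht
  have hev' : ∀ᶠ t in 𝓝[≠] (0:ℝ), |t| < δ := hev.filter_mono nhdsWithin_le_nhds
  have hne : ∀ᶠ t in 𝓝[≠] (0:ℝ), t ≠ 0 := by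
    have := eventually_mem_nhdsWithin (a := (0:ℝ)) (s := {(0:ℝ)}ᶜ)
    simpa using this
  have main : Tendsto (fun t => (G t - 1)/t^2) (𝓝[≠] (0:ℝ)) (𝓝 (((p-2)*c^2+m)/2)) := by
    apply HasDerivAt.lhopital_zero_nhdsNE (f' := Gd) (g' := fun t => 2*t)
    · exact hev'.mono (fun t ht => (hGd t ht).sub_const 1)
    · refine Eventually.of_forall (fun t => ?_)
      have h0 := hasDerivAt_pow 2 t
      refine h0.congr_deriv ?_
      push_cast
      ring
    · exact hne.mono (fun t ht => by simpa using ht)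
    · have hcont : ContinuousAt G 0 := (hGd 0 (by simpa using hδ0)).continuousAt
      have h0 : Tendsto (fun t => G t - 1) (𝓝 (0:ℝ)) (𝓝 (G 0 - 1)) :=
        (hcont.sub continuousAt_const).tendsto
      rw [hG0, sub_self] at h0
      exact h0.mono_left nhdsWithin_le_nhds
    · have h0 : Tendsto (fun t : ℝ => t^2) (𝓝 (0:ℝ)) (𝓝 ((0:ℝ)^2)) :=
        ((continuous_pow 2).tendsto 0)
      rw [(by norm_num : ((0:ℝ))^2 = 0)] at h0
      exact h0.mono_left nhdsWithin_le_nhds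
    · have heq : ∀ᶠ t in 𝓝[≠] (0:ℝ),
          ((slope χ 0 t + slope χ 0 (-t))/4) * ((1/p) * Φ t ^ (1/p-1)) = Gd t / (2*t) := by
        filter_upwards [hne] with t ht
        have hpne : p ≠ 0 := hp0.ne'
        show ((slope χ 0 t + slope χ 0 (-t))/4) * ((1/p) * Φ t ^ (1/p-1)) =
          ((χ t + χ (-t) * (-1))/2 * (1/p) * Φ t ^ (1/p - 1)) / (2*t)
        rw [slope_def_field, slope_def_field]
        generalize χ t = a
        generalize χ (-t) = b
        generalize χ 0 = c0
        generalize Φ t ^ (1/p - 1) = X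
        rw [show -t - 0 = -t by ring,
          show (b - c0)/(-t) = (c0 - b)/t by rw [div_neg, ← neg_div]; congr 1; ring]
        field_simp
        ring
      apply Tendsto.congr' heq
      have h1 : Tendsto (fun t => (slope χ 0 t + slope χ 0 (-t))/4) (𝓝[≠] (0:ℝ))
          (𝓝 ((A+A)/4)) := (hslope.add hslopeneg).div_const 4
      have h2 : Tendsto (fun t => (1/p) * Φ t ^ (1/p-1)) (𝓝[≠] (0:ℝ)) (𝓝 ((1/p) * 1)) := by
        have hΦcont : ContinuousAt Φ 0 := (hΦd 0 (by simpa using hδ0)).continuousAt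
        have hrc : ContinuousAt (fun x : ℝ => x ^ (1/p-1)) (Φ 0) :=
          Real.continuousAt_rpow_const _ _ (Or.inl (by rw [hΦ0]; exact one_ne_zero))
        have hcomp : ContinuousAt (fun t => Φ t ^ (1/p-1)) 0 := hrc.comp hΦcont
        have h3 : Tendsto (fun t => (1/p) * Φ t ^ (1/p-1)) (𝓝 (0:ℝ))
            (𝓝 ((1/p) * (Φ 0) ^ (1/p-1))) := ContinuousAt.tendsto (continuousAt_const.mul hcomp)
        rw [hΦ0, Real.one_rpow] at h3
        exact h3.mono_left nhdsWithin_le_nhds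
      have h4 := h1.mul h2
      convert h4 using 2
      rw [hA]
      field_simp
      ring
  exact main.congr (fun t => by rw [hF t])

theorem stmt_14 (p q : ℝ) (z : ℂ) (hp : 1 ≤ p) (hpq : p ≤ q)
    (h : ∀ a b : ℂ,
      ((‖a + z * b‖ ^ q + ‖a - z * b‖ ^ q) / 2) ^ (1 / q)
        ≤ ((‖a + b‖ ^ p + ‖a - b‖ ^ p) / 2) ^ (1 / p)) :
    ‖(p : ℂ) - 2 - z ^ 2 * ((q : ℂ) - 2)‖ ≤ p - ‖z‖ ^ 2 * q := by
  have hq1 : 1 ≤ q := le_trans hp hpq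
  have key : ∀ v : ℂ, ‖v‖ = 1 →
      (q-2)*((z*v).re)^2 + ‖z‖^2 ≤ (p-2)*(v.re)^2 + 1 := by
    intro v hv
    have hzv : ‖z*v‖ = ‖z‖ := by rw [norm_mul, hv, mul_one]
    have hq2 : Tendsto (fun t : ℝ =>
        ((((‖1 + z*((t:ℂ)*v)‖ ^ q + ‖1 - z*((t:ℂ)*v)‖ ^ q)/2) ^ (1/q)) - 1)/t^2)
        (𝓝[≠] (0:ℝ)) (𝓝 (((q-2)*((z*v).re)^2 + ‖z*v‖^2)/2)) := by
      apply keyA q ((z*v).re) (‖z*v‖^2) hq1 (by positivity)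
      intro t
      have e1 : (1:ℂ) + z*((t:ℂ)*v) = 1 + (t:ℂ)*(z*v) := by ring
      have e2 : (1:ℂ) - z*((t:ℂ)*v) = 1 + ((-t : ℝ):ℂ)*(z*v) := by push_cast; ring
      rw [e1, e2, norm_rpow_eq (z*v) q t, norm_rpow_eq (z*v) q (-t)]
    have hp2 : Tendsto (fun t : ℝ =>
        ((((‖1 + (t:ℂ)*v‖ ^ p + ‖1 - (t:ℂ)*v‖ ^ p)/2) ^ (1/p)) - 1)/t^2)
        (𝓝[≠] (0:ℝ)) (𝓝 (((p-2)*(v.re)^2 + ‖v‖^2)/2)) := by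
      apply keyA p (v.re) (‖v‖^2) hp (by positivity)
      intro t
      have e2 : (1:ℂ) - (t:ℂ)*v = 1 + ((-t : ℝ):ℂ)*v := by push_cast; ring
      rw [e2, norm_rpow_eq v p t, norm_rpow_eq v p (-t)]
    have hle := le_of_tendsto_of_tendsto hq2 hp2 ?_
    · rw [hzv, hv] at hle
      simp only [one_pow] at hle
      linarith
    · have hne : ∀ᶠ t in 𝓝[≠] (0:ℝ), t ≠ 0 := by
        have := eventually_mem_nhdsWithin (a := (0:ℝ)) (s := {(0:ℝ)}ᶜ)
        simpa using this
      filter_upwards [hne] with t ht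
      have ht2 : (0:ℝ) < t^2 := by positivity
      have hh := h 1 ((t:ℂ)*v)
      gcongr
  set ζ : ℂ := (p:ℂ) - 2 - z^2*((q:ℂ) - 2) with hζ
  set A : ℝ := Complex.arg ζ with hA
  set v : ℂ := Complex.exp ((((Real.pi - A)/2 : ℝ) : ℂ) * Complex.I) with hv
  have hv1 : ‖v‖ = 1 := by
    rw [hv]
    exact Complex.norm_exp_ofReal_mul_I _
  have hv2 : v^2 * ζ = -((‖ζ‖ : ℝ) : ℂ) := by
    have hsq : v^2 = Complex.exp ((((Real.pi - A : ℝ)) : ℂ) * Complex.I) := by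
      rw [hv, ← Complex.exp_nat_mul]
      congr 1
      push_cast
      ring
    calc v^2 * ζ
        = Complex.exp ((((Real.pi - A:ℝ)):ℂ)*Complex.I) *
          ((‖ζ‖ : ℂ) * Complex.exp ((A:ℂ) * Complex.I)) := by
          rw [hsq, Complex.norm_mul_exp_arg_mul_I]
      _ = (‖ζ‖ : ℂ) *
          Complex.exp ((((Real.pi - A:ℝ)):ℂ)*Complex.I + (A:ℂ)*Complex.I) := by
          rw [Complex.exp_add]; ring
      _ = (‖ζ‖ : ℂ) * Complex.exp ((Real.pi:ℂ) * Complex.I) := by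
          congr 2
          push_cast
          ring
      _ = -((‖ζ‖:ℝ):ℂ) := by
          rw [Complex.exp_pi_mul_I]; ring
  have hk := key v hv1
  have hx : ((z*v).re)^2 = (‖z‖^2 + ((z^2*v^2).re))/2 := by
    rw [re_sq (z*v), mul_pow, norm_mul, hv1, mul_one]
  have hy : (v.re)^2 = (1 + (v^2).re)/2 := by
    rw [re_sq v, hv1]
    norm_num
  have hre : (v^2 * ζ).re = (p-2)*((v^2).re) - (q-2)*((z^2*v^2).re) := by
    have hz2 : v^2 * ζ = (((p-2:ℝ)):ℂ)*(v^2) - (((q-2:ℝ)):ℂ)*(z^2*v^2) := by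
      rw [hζ]; push_cast; ring
    rw [hz2]
    simp [Complex.sub_re, Complex.re_ofReal_mul]
  have hre2 : (v^2*ζ).re = -‖ζ‖ := by rw [hv2]; simp
  rw [hx, hy] at hk
  linarith [hk, hre, hre2]
end

section
/- Let p > 1 and z ∈ ℂ. Then |p - 2 - z²(p-2)| ≤ p - |z|²p if and only if both |z + i|p-2|/(2√(p-1))| ≤ p/(2√(p-1)) and |z - i|p-2|/(2√(p-1))| ≤ p/(2√(p-1)). -/
lemma sq_iff_aux (A B : ℝ) (hA : 0 ≤ A) : A ≤ B ↔ (0 ≤ B ∧ A ^ 2 ≤ B ^ 2) := by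
  constructor
  · intro h
    exact ⟨le_trans hA h, pow_le_pow_left₀ hA h 2⟩
  · rintro ⟨h0, h2⟩
    nlinarith

set_option maxHeartbeats 1000000 in
theorem stmt_15 (p : ℝ) (hp : 1 < p) (z : ℂ) :
    ‖(p : ℂ) - 2 - z ^ 2 * ((p : ℂ) - 2)‖ ≤ p - ‖z‖ ^ 2 * p ↔
      (‖z + Complex.I * (|p - 2| / (2 * Real.sqrt (p - 1)))‖ ≤ p / (2 * Real.sqrt (p - 1)) ∧
       ‖z - Complex.I * (|p - 2| / (2 * Real.sqrt (p - 1)))‖ ≤ p / (2 * Real.sqrt (p - 1))) := by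
  have hs0 : 0 < Real.sqrt (p - 1) := Real.sqrt_pos.2 (by linarith)
  have hs2 : Real.sqrt (p - 1) ^ 2 = p - 1 := Real.sq_sqrt (by linarith)
  set s := Real.sqrt (p - 1) with hs
  have ha0 : (0:ℝ) ≤ |p - 2| := abs_nonneg _
  have ha2 : |p - 2| ^ 2 = (p - 2) ^ 2 := sq_abs _
  set a := |p - 2| with ha
  set x := z.re with hx
  set y := z.im with hy
  have hz2 : ‖z‖ ^ 2 = x ^ 2 + y ^ 2 := by
    rw [Complex.sq_norm]; simp [Complex.normSq_apply]; ring
  have h1 : ‖(p : ℂ) - 2 - z ^ 2 * ((p : ℂ) - 2)‖ ^ 2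
      = a ^ 2 * ((1 - (x^2+y^2))^2 + 4*y^2) := by
    rw [Complex.sq_norm]
    simp [Complex.normSq_apply, Complex.sub_re, Complex.sub_im, Complex.mul_re,
      Complex.mul_im, pow_two, hx, hy]
    nlinarith [sq_abs (p-2)]
  have h2 : ‖z + Complex.I * ((a:ℂ) / (2 * (s:ℂ)))‖ ^ 2
      = x^2 + (y + a/(2*s))^2 := by
    rw [Complex.sq_norm]
    simp [Complex.normSq_apply, Complex.add_re, Complex.add_im, Complex.mul_re,
      Complex.mul_im, Complex.div_re, Complex.div_im, hx, hy]
    field_simp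
  have h3 : ‖z - Complex.I * ((a:ℂ) / (2 * (s:ℂ)))‖ ^ 2
      = x^2 + (y - a/(2*s))^2 := by
    rw [Complex.sq_norm]
    simp [Complex.normSq_apply, Complex.sub_re, Complex.sub_im, Complex.mul_re,
      Complex.mul_im, Complex.div_re, Complex.div_im, hx, hy]
    field_simp
  have hp2s : (0:ℝ) ≤ p / (2 * s) := by positivity
  rw [sq_iff_aux _ _ (norm_nonneg _), sq_iff_aux _ _ (norm_nonneg _),
    sq_iff_aux _ _ (norm_nonneg _), hz2, h1, h2, h3]
  have e1 : x^2 + (y + a/(2*s))^2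
      = (4*s^2*(x^2+y^2) + 4*s*a*y + a^2) / (4*s^2) := by
    field_simp; ring
  have e2 : x^2 + (y - a/(2*s))^2
      = (4*s^2*(x^2+y^2) - 4*s*a*y + a^2) / (4*s^2) := by
    field_simp; ring
  have e3 : (p/(2*s))^2 = p^2 / (4*s^2) := by
    rw [div_pow]; ring_nf
  have h4s : (0:ℝ) < 4*s^2 := by positivity
  rw [e1, e2, e3, div_le_div_iff_of_pos_right h4s, div_le_div_iff_of_pos_right h4s]
  have hpa : p^2 = a^2 + 4*s^2 := by nlinarith
  clear h1 h2 h3 hz2 e1 e2 e3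
  have hs2p : (0:ℝ) < s * s := mul_pos hs0 hs0
  constructor
  · rintro ⟨h0, hq⟩
    have hr : 0 ≤ 1 - (x^2+y^2) := by nlinarith
    have hk : (a*y)^2 ≤ (s*(1 - (x^2+y^2)))^2 := by nlinarith
    have hnn : 0 ≤ s*(1 - (x^2+y^2)) := by positivity
    have hup : a*y ≤ s*(1 - (x^2+y^2)) := by nlinarith [hk, hnn]
    have hdn : -(s*(1 - (x^2+y^2))) ≤ a*y := by nlinarith [hk, hnn]
    constructor
    · exact ⟨hp2s, by nlinarith [mul_le_mul_of_nonneg_left hup (by positivity : (0:ℝ) ≤ 4*s)]⟩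
    · exact ⟨hp2s, by nlinarith [mul_le_mul_of_nonneg_left hdn (by positivity : (0:ℝ) ≤ 4*s)]⟩
  · rintro ⟨⟨-, hA⟩, ⟨-, hB⟩⟩
    have hr : 0 ≤ 1 - (x^2+y^2) := by nlinarith
    have hu : s*(a*y) ≤ s^2*(1 - (x^2+y^2)) := by nlinarith
    have hd : -(s^2*(1 - (x^2+y^2))) ≤ s*(a*y) := by nlinarith
    have hprod : 0 ≤ (s^2*(1 - (x^2+y^2)) - s*(a*y)) * (s^2*(1 - (x^2+y^2)) + s*(a*y)) := by
      apply mul_nonneg <;> linarith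
    have hsq : (a*y)^2 ≤ s^2*(1 - (x^2+y^2))^2 := by nlinarith [hprod, hs2p]
    refine ⟨by nlinarith, by nlinarith [hsq]⟩
end

section
/- Fix p ≥ 2 and for t ∈ ℝ let c(t) ≥ 1 be such that the inequality |1+c(t)y e^{i(t+a)}|^p + |1-c(t)y e^{i(t+a)}|^p ≥ |1+y e^{ia}|^p + |1-y e^{ia}|^p holds for all a ∈ ℝ and all y with 0 ≤ c(t)·y ≤ 1. Then the same inequality holds for all y ≥ 0 (with the same t, for all a). -/
set_option maxHeartbeats 1000000

lemma norm_formula19 (p x θ : ℝ) :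
    ‖1 + (x:ℂ) * Complex.exp (Complex.I * θ)‖ ^ p = (1 + x^2 + 2*x*Real.cos θ) ^ (p/2) := by
  have h2 : ‖1 + (x:ℂ) * Complex.exp (Complex.I * θ)‖^(2:ℕ) = 1 + x^2 + 2*x*Real.cos θ := by
    rw [mul_comm Complex.I, Complex.exp_mul_I]
    rw [Complex.sq_norm, Complex.normSq_apply]
    simp [Complex.cos_ofReal_re, Complex.sin_ofReal_re]
    nlinarith [Real.sin_sq_add_cos_sq θ]
  calc ‖1 + (x:ℂ) * Complex.exp (Complex.I * θ)‖ ^ p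
      = (‖1 + (x:ℂ) * Complex.exp (Complex.I * θ)‖ ^ (2:ℕ)) ^ (p/2) := by
        rw [← Real.rpow_natCast _ 2, ← Real.rpow_mul (norm_nonneg _)]
        push_cast
        rw [show (2:ℝ)*(p/2) = p by ring]
    _ = (1 + x^2 + 2*x*Real.cos θ) ^ (p/2) := by rw [h2]

lemma pair_formula19 (p x θ : ℝ) :
    ‖1 + (x:ℂ) * Complex.exp (Complex.I * θ)‖ ^ p + ‖1 - (x:ℂ) * Complex.exp (Complex.I * θ)‖ ^ p
    = (1 + x^2 + 2*x*Real.cos θ) ^ (p/2) + (1 + x^2 - 2*x*Real.cos θ) ^ (p/2) := by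
  have e : (1 : ℂ) - (x:ℂ) * Complex.exp (Complex.I * θ)
      = 1 + ((-x : ℝ):ℂ) * Complex.exp (Complex.I * θ) := by push_cast; ring
  rw [e, norm_formula19, norm_formula19]
  ring_nf

lemma base_nonneg19 (u A : ℝ) (hA : -1 ≤ A) (hA' : A ≤ 1) :
    0 ≤ 1 + u^2 + 2*u*A ∧ 0 ≤ 1 + u^2 - 2*u*A := by
  constructor
  · nlinarith [sq_nonneg (1-u), sq_nonneg (1+u)]
  · nlinarith [sq_nonneg (1-u), sq_nonneg (1+u)]

lemma core19 (p t c : ℝ) (hp : 2 ≤ p) (hc : 1 ≤ c) (a y : ℝ) (hy : 0 ≤ y) (hcy : 1 < c*y)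
    (H : (1 + (1/(c^2*y))^2 + 2*(1/(c^2*y))*Real.cos a) ^ (p/2)
        + (1 + (1/(c^2*y))^2 - 2*(1/(c^2*y))*Real.cos a) ^ (p/2)
      ≤ (1 + (c*(1/(c^2*y)))^2 + 2*(c*(1/(c^2*y)))*Real.cos (t+a)) ^ (p/2)
        + (1 + (c*(1/(c^2*y)))^2 - 2*(c*(1/(c^2*y)))*Real.cos (t+a)) ^ (p/2)) :
    (1 + y^2 + 2*y*Real.cos a) ^ (p/2) + (1 + y^2 - 2*y*Real.cos a) ^ (p/2)
      ≤ (1 + (c*y)^2 + 2*(c*y)*Real.cos (t+a)) ^ (p/2)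
        + (1 + (c*y)^2 - 2*(c*y)*Real.cos (t+a)) ^ (p/2) := by
  have hc0 : (0:ℝ) < c := lt_of_lt_of_le one_pos hc
  have hy0 : 0 < y := by nlinarith
  have hp0 : (0:ℝ) ≤ p/2 := by linarith
  set A := Real.cos a with hAdef
  set B := Real.cos (t+a) with hBdef
  have hA := Real.neg_one_le_cos a
  have hA' := Real.cos_le_one a
  have hB := Real.neg_one_le_cos (t+a)
  have hB' := Real.cos_le_one (t+a)
  set z : ℝ := 1/(c^2*y) with hzdef
  have hz0 : 0 < z := by positivity
  obtain ⟨nz1, nz2⟩ := base_nonneg19 z A hA hA'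
  obtain ⟨ncz1, ncz2⟩ := base_nonneg19 (c*z) B hB hB'
  obtain ⟨ny1, ny2⟩ := base_nonneg19 y A hA hA'
  obtain ⟨ncy1, ncy2⟩ := base_nonneg19 (c*y) B hB hB'
  set K : ℝ := (c^2*y)^2 with hKdef
  have hK : (0:ℝ) < K := by positivity
  have H2 : (K * (1 + z^2 + 2*z*A)) ^ (p/2) + (K * (1 + z^2 - 2*z*A)) ^ (p/2)
      ≤ (K * (1 + (c*z)^2 + 2*(c*z)*B)) ^ (p/2) + (K * (1 + (c*z)^2 - 2*(c*z)*B)) ^ (p/2) := by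
    rw [Real.mul_rpow hK.le nz1, Real.mul_rpow hK.le nz2,
        Real.mul_rpow hK.le ncz1, Real.mul_rpow hK.le ncz2]
    rw [← mul_add, ← mul_add]
    exact mul_le_mul_of_nonneg_left H (Real.rpow_nonneg hK.le _)
  have id1 : K * (1 + z^2 + 2*z*A) = c^4*y^2 + 1 + 2*(c^2*y)*A := by
    rw [hKdef, hzdef]; field_simp
  have id2 : K * (1 + z^2 - 2*z*A) = c^4*y^2 + 1 - 2*(c^2*y)*A := by
    rw [hKdef, hzdef]; field_simp
  have id3 : K * (1 + (c*z)^2 + 2*(c*z)*B) = c^2 * (1 + (c*y)^2 + 2*(c*y)*B) := by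
    rw [hKdef, hzdef]; field_simp; ring
  have id4 : K * (1 + (c*z)^2 - 2*(c*z)*B) = c^2 * (1 + (c*y)^2 - 2*(c*y)*B) := by
    rw [hKdef, hzdef]; field_simp; ring
  rw [id1, id2, id3, id4] at H2
  have hc2 : (0:ℝ) ≤ c^2 := by positivity
  rw [Real.mul_rpow hc2 ncy1, Real.mul_rpow hc2 ncy2] at H2
  have hq1 : (0:ℝ) ≤ c^2 - 1 := by nlinarith
  have hq2 : (0:ℝ) ≤ (c*y)^2 - 1 := by nlinarith
  have hbase : c^2 + c^2*y^2 ≤ c^4*y^2 + 1 := by nlinarith [mul_nonneg hq1 hq2]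
  have mono1 : (c^2 * (1 + y^2 + 2*y*A)) ^ (p/2) ≤ (c^4*y^2 + 1 + 2*(c^2*y)*A) ^ (p/2) := by
    apply Real.rpow_le_rpow (by positivity) _ hp0
    nlinarith
  have mono2 : (c^2 * (1 + y^2 - 2*y*A)) ^ (p/2) ≤ (c^4*y^2 + 1 - 2*(c^2*y)*A) ^ (p/2) := by
    apply Real.rpow_le_rpow (by positivity) _ hp0
    nlinarith
  have final : (c^2 * (1 + y^2 + 2*y*A)) ^ (p/2) + (c^2 * (1 + y^2 - 2*y*A)) ^ (p/2)
      ≤ (c^2) ^ (p/2) * (1 + (c*y)^2 + 2*(c*y)*B) ^ (p/2)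
        + (c^2) ^ (p/2) * (1 + (c*y)^2 - 2*(c*y)*B) ^ (p/2) := by linarith
  rw [Real.mul_rpow hc2 ny1, Real.mul_rpow hc2 ny2, ← mul_add, ← mul_add] at final
  have hcp : (0:ℝ) < (c^2) ^ (p/2) := Real.rpow_pos_of_pos (by positivity) _
  exact le_of_mul_le_mul_left final hcp

theorem stmt_19 (p t c : ℝ) (hp : 2 ≤ p) (hc : 1 ≤ c)
    (h : ∀ a y : ℝ, 0 ≤ y → c * y ≤ 1 →
      ‖1 + (y : ℂ) * Complex.exp (Complex.I * a)‖ ^ p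
        + ‖1 - (y : ℂ) * Complex.exp (Complex.I * a)‖ ^ p
      ≤ ‖1 + (c : ℂ) * y * Complex.exp (Complex.I * (t + a))‖ ^ p
        + ‖1 - (c : ℂ) * y * Complex.exp (Complex.I * (t + a))‖ ^ p) :
    ∀ a y : ℝ, 0 ≤ y →
      ‖1 + (y : ℂ) * Complex.exp (Complex.I * a)‖ ^ p
        + ‖1 - (y : ℂ) * Complex.exp (Complex.I * a)‖ ^ p
      ≤ ‖1 + (c : ℂ) * y * Complex.exp (Complex.I * (t + a))‖ ^ p
        + ‖1 - (c : ℂ) * y * Complex.exp (Complex.I * (t + a))‖ ^ p := by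
  intro a y hy
  have hc0 : (0:ℝ) < c := lt_of_lt_of_le one_pos hc
  have ecast : ((t:ℂ) + (a:ℂ)) = (((t+a : ℝ)):ℂ) := by push_cast; ring
  rcases le_or_gt (c*y) 1 with hcy | hcy
  · exact h a y hy hcy
  · have hy0 : 0 < y := by nlinarith
    set z : ℝ := 1/(c^2*y) with hzdef
    have hz0 : 0 < z := by positivity
    have hcz : c * z ≤ 1 := by
      rw [hzdef]
      rw [show c * (1/(c^2*y)) = 1/(c*y) by field_simp]
      rw [div_le_one (by positivity)]
      linarith
    have H := h a z hz0.le hcz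
    have ecz : (c:ℂ) * (z:ℝ) = (((c*z : ℝ)):ℂ) := by push_cast; ring
    have ecy : (c:ℂ) * (y:ℝ) = (((c*y : ℝ)):ℂ) := by push_cast; ring
    rw [ecast, ecz, pair_formula19 p z a, pair_formula19 p (c*z) (t+a)] at H
    rw [ecast, ecy, pair_formula19 p y a, pair_formula19 p (c*y) (t+a)]
    refine core19 p t c hp hc a y hy hcy ?_
    rw [← hzdef]
    exact H
end
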